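/- Let (C, ∂) be a free, finitely generated chain complex over R = 𝔽₂[[U]]. Then there exist finite index sets I and J, natural numbers (n_i)_{i∈I}, and an R-basis of C consisting of elements (a_i)_{i∈I}, (b_i)_{i∈I}, (c_j)_{j∈J} such that ∂(a_i) = U^{n_i}·b_i, ∂(b_i) = 0 and ∂(c_j) = 0 for all i ∈ I and j ∈ J. In other words, C is chain isomorphic to a direct sum of 1-step complexes (a single free generator with vanishing differential) and 2-step complexes of the form a →(multiplication by U^n)→ b. (Lemma 3.1 of the paper.) -/

import Mathlib

noncomputable section

abbrev F2 : Type := ZMod 2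

/-- `R = 𝔽₂[[U]]`, the ring of formal power series over `𝔽₂`. -/
abbrev R2 : Type := PowerSeries F2

/-- **Classification of free, finitely generated chain complexes over `𝔽₂[[U]]`**
(Lemma 3.1): any such complex is chain isomorphic to a direct sum of 1-step complexes
(a single free generator `c_j` with vanishing differential) and 2-step complexes
`a_i →(·U^{n_i})→ b_i`.  Equivalently, there is a basis `(a_i)_{i∈I}, (b_i)_{i∈I},
(c_j)_{j∈J}` of `C` with `∂ a_i = U^{n_i} • b_i`, `∂ b_i = 0` and `∂ c_j = 0`. -/
theorem classification_of_fg_free_complexes_over_F2UU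
    (M : Type) [AddCommGroup M] [Module R2 M] [Module.Free R2 M] [Module.Finite R2 M]
    (d : M →ₗ[R2] M) (hd : d ∘ₗ d = 0) :
    ∃ (m k : ℕ) (n : Fin m → ℕ) (B : Module.Basis ((Fin m ⊕ Fin m) ⊕ Fin k) R2 M),
      (∀ i : Fin m, d (B (Sum.inl (Sum.inl i))) =
        (PowerSeries.X ^ n i : R2) • B (Sum.inl (Sum.inr i))) ∧
      (∀ i : Fin m, d (B (Sum.inl (Sum.inr i))) = 0) ∧
      (∀ j : Fin k, d (B (Sum.inr j)) = 0) := by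
  classical
  have hNK : LinearMap.range d ≤ LinearMap.ker d := by
    rintro x ⟨y, rfl⟩
    simpa using LinearMap.ext_iff.mp hd y
  let b := Module.Free.chooseBasis R2 M
  obtain ⟨m, o, hmo, bK, bN, a, hsnf⟩ :=
    Submodule.exists_smith_normal_form_of_le b (LinearMap.range d) (LinearMap.ker d) hNK
  have ha : ∀ i, a i ≠ 0 := by
    intro i h
    apply bN.ne_zero i
    have : (bN i : M) = 0 := by rw [hsnf i, h, zero_smul]
    exact Subtype.ext this
  choose e u hu using fun i =>
    IsDiscreteValuationRing.eq_unit_mul_pow_irreducible (ha i) PowerSeries.X_irreducible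
  choose s hs using fun i => (bN i).2
  -- scaled basis of the kernel
  set w : Fin o → R2ˣ := fun j => if h : (j : ℕ) < m then u ⟨j, h⟩ else 1 with hw
  set bK' : Module.Basis (Fin o) R2 (LinearMap.ker d) := bK.unitsSMul w with hbK'
  have hbK'mem : ∀ j, ((bK' j : M)) ∈ LinearMap.ker d := fun j => (bK' j).2
  have hdbK' : ∀ j, d (bK' j : M) = 0 := fun j => hbK'mem j
  -- key : d (s i) = X ^ e i • bK' (castLE i)
  have key : ∀ i : Fin m, d (s i) = (PowerSeries.X ^ e i : R2) • (bK' (Fin.castLE hmo i) : M) := by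
    intro i
    have hlt : ((Fin.castLE hmo i : Fin o) : ℕ) < m := i.2
    have hfin : (⟨((Fin.castLE hmo i : Fin o) : ℕ), hlt⟩ : Fin m) = i := Fin.ext rfl
    have h1 : bK' (Fin.castLE hmo i) = u i • bK (Fin.castLE hmo i) := by
      rw [hbK', Module.Basis.unitsSMul_apply, hw]
      simp only [dif_pos hlt, hfin]
    rw [hs i, hsnf i, hu i, h1]
    push_cast
    rw [Units.smul_def, smul_smul, mul_comm]
  -- the family
  set F : Fin m ⊕ Fin o → M := Sum.elim s (fun j => (bK' j : M)) with hF
  have hbNli : LinearIndependent R2 (fun i => (bN i : M)) :=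
    bN.linearIndependent.map' (LinearMap.range d).subtype (Submodule.ker_subtype _)
  have hbK'li : LinearIndependent R2 (fun j => (bK' j : M)) :=
    bK'.linearIndependent.map' (LinearMap.ker d).subtype (Submodule.ker_subtype _)
  have hli : LinearIndependent R2 F := by
    rw [Fintype.linearIndependent_iff]
    intro g hg
    rw [Fintype.sum_sum_type] at hg
    have hdg : ∑ i, g (Sum.inl i) • (bN i : M) = 0 := by
      have := congrArg d hg
      simpa [hF, map_add, map_sum, map_smul, hs, hdbK', smul_zero] using this
    have hgl : ∀ i, g (Sum.inl i) = 0 :=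
      Fintype.linearIndependent_iff.mp hbNli _ hdg
    have hg2 : ∑ j, g (Sum.inr j) • (bK' j : M) = 0 := by
      rw [Fintype.sum_congr _ _ (fun i => by rw [hgl i, zero_smul]),
        Finset.sum_const_zero, zero_add] at hg
      simpa [hF] using hg
    have hgr : ∀ j, g (Sum.inr j) = 0 :=
      Fintype.linearIndependent_iff.mp hbK'li _ hg2
    rintro (i | j)
    exacts [hgl i, hgr j]
  have hspan : ⊤ ≤ Submodule.span R2 (Set.range F) := by
    intro x _
    have hdx : d x ∈ LinearMap.range d := ⟨x, rfl⟩
    set c : Fin m → R2 := fun i => bN.repr ⟨d x, hdx⟩ i with hc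
    have h2 : d x = ∑ i, c i • (bN i : M) := by
      calc d x = ((⟨d x, hdx⟩ : LinearMap.range d) : M) := rfl
        _ = ((∑ i, c i • bN i : LinearMap.range d) : M) := by rw [bN.sum_repr ⟨d x, hdx⟩]
        _ = ∑ i, c i • (bN i : M) := by push_cast; rfl
    have h3 : d (x - ∑ i, c i • s i) ∈ LinearMap.ker d ∧ d (x - ∑ i, c i • s i) = 0 := by
      constructor
      · exact hNK ⟨_, rfl⟩
      · rw [map_sub, map_sum, h2]
        simp only [map_smul, hs]
        simp
    have h3' : x - ∑ i, c i • s i ∈ LinearMap.ker d := h3.2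
    set rz : Fin o → R2 := fun j => bK'.repr ⟨x - ∑ i, c i • s i, h3'⟩ j with hrz
    have h4 : x - ∑ i, c i • s i = ∑ j, rz j • (bK' j : M) := by
      calc x - ∑ i, c i • s i
          = ((⟨x - ∑ i, c i • s i, h3'⟩ : LinearMap.ker d) : M) := rfl
        _ = ((∑ j, rz j • bK' j : LinearMap.ker d) : M) := by
            rw [bK'.sum_repr ⟨x - ∑ i, c i • s i, h3'⟩]
        _ = ∑ j, rz j • (bK' j : M) := by push_cast; rfl
    have hx : x = ∑ i, c i • s i + ∑ j, rz j • (bK' j : M) := by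
      rw [← h4]; abel
    rw [hx]
    apply Submodule.add_mem
    · exact Submodule.sum_mem _ fun i _ => Submodule.smul_mem _ _
        (Submodule.subset_span ⟨Sum.inl i, rfl⟩)
    · exact Submodule.sum_mem _ fun j _ => Submodule.smul_mem _ _
        (Submodule.subset_span ⟨Sum.inr j, rfl⟩)
  set BM : Module.Basis (Fin m ⊕ Fin o) R2 M := Module.Basis.mk hli hspan with hBM
  have hok : o = m + (o - m) := (Nat.add_sub_cancel' hmo).symm
  set ee : (Fin m ⊕ Fin o) ≃ ((Fin m ⊕ Fin m) ⊕ Fin (o - m)) :=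
    (Equiv.sumCongr (Equiv.refl (Fin m))
      ((finCongr hok).trans finSumFinEquiv.symm)).trans (Equiv.sumAssoc _ _ _).symm with hee
  have h2 : ∀ i : Fin m, ee.symm (Sum.inl (Sum.inr i)) = Sum.inr (Fin.castLE hmo i) := by
    intro i
    simp only [hee, Equiv.symm_trans_apply, Equiv.symm_symm, Equiv.sumAssoc_apply_inl_inr,
      Equiv.sumCongr_symm, Equiv.sumCongr_apply, Sum.map_inr, Equiv.symm_trans_apply]
    exact congrArg Sum.inr (by ext; simp)
  refine ⟨m, o - m, e, BM.reindex ee, ?_, ?_, ?_⟩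
  · intro i
    have h1 : ee.symm (Sum.inl (Sum.inl i)) = Sum.inl i := by
      simp [hee, Equiv.sumAssoc]
    rw [Module.Basis.reindex_apply, Module.Basis.reindex_apply, h1, h2 i, hBM, Module.Basis.mk_apply, Module.Basis.mk_apply]
    exact key i
  · intro i
    rw [Module.Basis.reindex_apply, h2 i, hBM, Module.Basis.mk_apply]
    exact hdbK' _
  · intro j
    obtain ⟨j', hj'⟩ : ∃ j', ee.symm (Sum.inr j) = Sum.inr j' := by
      simp [hee, Equiv.sumAssoc]
    rw [Module.Basis.reindex_apply, hj', hBM, Module.Basis.mk_apply]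
    exact hdbK' _

end
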